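/- Let G be the Gersten group, presented by generators a, b, s, t and relators ab = ba, s a s⁻¹ = a⁻¹b², t a t⁻¹ = b. Then every nontrivial subgroup S of G (finitely generated or not) admits a surjective group homomorphism onto ℤ. -/

import Mathlib

/-- Generators `a, b, s, t` of the Gersten group. -/
def a14 : FreeGroup (Fin 4) := FreeGroup.of 0
def b14 : FreeGroup (Fin 4) := FreeGroup.of 1
def s14 : FreeGroup (Fin 4) := FreeGroup.of 2
def t14 : FreeGroup (Fin 4) := FreeGroup.of 3

/-- Relators `ab = ba`, `s a s⁻¹ = a⁻¹b²`, `t a t⁻¹ = b` of the Gersten group. -/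
def relsGersten : Set (FreeGroup (Fin 4)) :=
  {a14 * b14 * (b14 * a14)⁻¹, s14 * a14 * s14⁻¹ * (a14⁻¹ * b14 ^ 2)⁻¹,
    t14 * a14 * t14⁻¹ * b14⁻¹}

namespace GerstenAux

abbrev F := FreeGroup (Fin 3)

def cF : F := FreeGroup.of 0
def sF : F := FreeGroup.of 1
def tF : F := FreeGroup.of 2

def ψf : F →* F := FreeGroup.lift ![cF, cF⁻¹ * cF⁻¹ * sF, cF⁻¹ * tF]
def ψg : F →* F := FreeGroup.lift ![cF, cF * (cF * sF), cF * tF]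

lemma ψgf : ψg.comp ψf = MonoidHom.id F := by
  ext i
  fin_cases i <;> simp [ψf, ψg, cF, sF, tF] <;> group

lemma ψfg : ψf.comp ψg = MonoidHom.id F := by
  ext i
  fin_cases i <;> simp [ψf, ψg, cF, sF, tF] <;> group

/-- The defining automorphism of the free group `F(c,s,t)`:
`c ↦ c`, `s ↦ c⁻²s`, `t ↦ c⁻¹t`. -/
def ψ : MulAut F := MonoidHom.toMulEquiv ψf ψg ψgf ψfg

@[simp] lemma ψ_c : ψ cF = cF := by simp [ψ, ψf, cF]
@[simp] lemma ψ_s : ψ sF = cF⁻¹ * cF⁻¹ * sF := by simp [ψ, ψf, sF, cF]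
@[simp] lemma ψ_t : ψ tF = cF⁻¹ * tF := by simp [ψ, ψf, tF, cF]

/-- The `ℤ`-action on `F` by powers of `ψ`. -/
def θ : Multiplicative ℤ →* MulAut F := zpowersHom (MulAut F) ψ

abbrev H := SemidirectProduct F (Multiplicative ℤ) θ

def g1 : Multiplicative ℤ := Multiplicative.ofAdd 1

@[simp] lemma θ_g1 : θ g1 = ψ := by simp [θ, g1]

open SemidirectProduct

/-- The images of the generators `a, b, s, t` in `F ⋊ ℤ`. -/
def imGen : Fin 4 → H := ![inr g1, inl cF * inr g1, inl sF, inl tF]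

lemma inr_mul_inl (g : Multiplicative ℤ) (n : F) :
    (inr g * inl n : H) = inl (θ g n) * inr g := by
  ext <;> simp

@[simp] lemma θ_g1_inv : θ g1⁻¹ = ψ⁻¹ := by simp [θ, g1]

@[simp] lemma ψinv_c : (ψ⁻¹ : MulAut F) cF = cF := by
  show ψ.symm cF = cF
  simp [ψ, MonoidHom.toMulEquiv, ψg, cF]
@[simp] lemma ψinv_s : (ψ⁻¹ : MulAut F) sF = cF * (cF * sF) := by
  show ψ.symm sF = _
  simp [ψ, MonoidHom.toMulEquiv, ψg, sF, cF]
@[simp] lemma ψinv_t : (ψ⁻¹ : MulAut F) tF = cF * tF := by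
  show ψ.symm tF = _
  simp [ψ, MonoidHom.toMulEquiv, ψg, tF, cF]

@[simp] lemma ψsymm_c : ψ.symm cF = cF := ψinv_c
@[simp] lemma ψsymm_s : ψ.symm sF = cF * (cF * sF) := ψinv_s
@[simp] lemma ψsymm_t : ψ.symm tF = cF * tF := ψinv_t

lemma rels_check : ∀ r ∈ relsGersten, FreeGroup.lift imGen r = 1 := by
  intro r hr
  rcases hr with h | h | h <;> subst h <;>
    simp only [relsGersten, a14, b14, s14, t14, map_mul, map_inv, map_pow,
      FreeGroup.lift_apply_of, imGen] <;>
    simp only [Matrix.cons_val_zero, Matrix.cons_val_one, Matrix.head_cons,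
      Matrix.cons_val_two, Matrix.tail_cons, Matrix.cons_val_three, Matrix.head_fin_const] <;>
    rw [mul_inv_eq_one] <;>
    ext <;>
    simp [mul_left, mul_right, inv_left, inv_right, pow_two] <;>
    group

abbrev G := PresentedGroup relsGersten

def aG : G := PresentedGroup.of 0
def bG : G := PresentedGroup.of 1
def sG : G := PresentedGroup.of 2
def tG : G := PresentedGroup.of 3

lemma rel_of_mem {r : FreeGroup (Fin 4)} (hr : r ∈ relsGersten) :
    (QuotientGroup.mk r : G) = 1 := by
  rw [QuotientGroup.eq_one_iff]
  exact Subgroup.subset_normalClosure hr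

lemma mk_of (i : Fin 4) : (QuotientGroup.mk (FreeGroup.of i) : G) = PresentedGroup.of i := rfl

lemma rel1 : aG * bG = bG * aG := by
  have := rel_of_mem (r := a14 * b14 * (b14 * a14)⁻¹) (by left; rfl)
  simp only [a14, b14, QuotientGroup.mk_mul, QuotientGroup.mk_inv, mk_of] at this
  rw [mul_inv_eq_one] at this
  exact this

lemma rel2 : sG * aG * sG⁻¹ = aG⁻¹ * bG ^ 2 := by
  have := rel_of_mem (r := s14 * a14 * s14⁻¹ * (a14⁻¹ * b14 ^ 2)⁻¹)
    (by right; left; rfl)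
  simp only [a14, b14, s14, QuotientGroup.mk_mul, QuotientGroup.mk_inv,
    QuotientGroup.mk_pow, mk_of] at this
  rw [mul_inv_eq_one] at this
  exact this

lemma rel3 : tG * aG * tG⁻¹ = bG := by
  have := rel_of_mem (r := t14 * a14 * t14⁻¹ * b14⁻¹) (by right; right; rfl)
  simp only [a14, b14, t14, QuotientGroup.mk_mul, QuotientGroup.mk_inv, mk_of] at this
  replace this := mul_inv_eq_one.mp this
  exact this

/-- The homomorphism `G →* F ⋊ ℤ`. -/
def Φ : G →* H := PresentedGroup.toGroup rels_check

@[simp] lemma Φ_a : Φ aG = inr g1 := PresentedGroup.toGroup.of rels_check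
@[simp] lemma Φ_b : Φ bG = inl cF * inr g1 := PresentedGroup.toGroup.of rels_check
@[simp] lemma Φ_s : Φ sG = inl sF := PresentedGroup.toGroup.of rels_check
@[simp] lemma Φ_t : Φ tG = inl tF := PresentedGroup.toGroup.of rels_check

/-- The map `F →* G` sending `c ↦ b a⁻¹`, `s ↦ s`, `t ↦ t`. -/
def f₁ : F →* G := FreeGroup.lift ![bG * aG⁻¹, sG, tG]

@[simp] lemma f₁_c : f₁ cF = bG * aG⁻¹ := by simp [f₁, cF]
@[simp] lemma f₁_s : f₁ sF = sG := by simp [f₁, sF]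
@[simp] lemma f₁_t : f₁ tF = tG := by simp [f₁, tF]

/-- The map `ℤ →* G` sending `1 ↦ a`. -/
def f₂ : Multiplicative ℤ →* G := zpowersHom G aG

lemma comm_ab : ∀ x : G, x = bG * aG⁻¹ → aG * x * aG⁻¹ = x := by
  rintro _ rfl
  have h := rel1
  calc aG * (bG * aG⁻¹) * aG⁻¹ = (aG * bG) * (aG⁻¹ * aG⁻¹) := by group
    _ = (bG * aG) * (aG⁻¹ * aG⁻¹) := by rw [h]
    _ = bG * aG⁻¹ := by group

lemma base_compat : ∀ x : F, f₁ (ψ x) = aG * f₁ x * aG⁻¹ := by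
  have hc : aG * (bG * aG⁻¹) = (bG * aG⁻¹) * aG := by
    calc aG * (bG * aG⁻¹) = (aG * bG) * aG⁻¹ := by group
      _ = (bG * aG) * aG⁻¹ := by rw [rel1]
      _ = (bG * aG⁻¹) * aG := by group
  have key : ∀ x : F, f₁ (ψ x) * aG = aG * f₁ x := by
    intro x
    induction x using FreeGroup.induction_on with
    | C1 => simp
    | of i =>
      fin_cases i
      · -- c
        show f₁ (ψ cF) * aG = aG * f₁ cF
        rw [ψ_c, f₁_c, ← hc]
      · -- s : need f₁(c⁻¹c⁻¹s) * a = a * s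
        show f₁ (ψ sF) * aG = aG * f₁ sF
        rw [ψ_s]
        simp only [map_mul, map_inv, f₁_c, f₁_s]
        -- (b a⁻¹)⁻¹ (b a⁻¹)⁻¹ s a = a s
        -- from rel2 : s a s⁻¹ = a⁻¹ b², so s a = a⁻¹ b² s
        have h2 : sG * aG = aG⁻¹ * bG ^ 2 * sG := by
          have := rel2
          calc sG * aG = (sG * aG * sG⁻¹) * sG := by group
            _ = aG⁻¹ * bG ^ 2 * sG := by rw [this]
        rw [mul_assoc _ sG aG, h2]
        have hba : bG⁻¹ * aG = aG * bG⁻¹ := by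
          have h := rel1
          calc bG⁻¹ * aG = bG⁻¹ * (aG * bG) * bG⁻¹ := by group
            _ = bG⁻¹ * (bG * aG) * bG⁻¹ := by rw [h]
            _ = aG * bG⁻¹ := by group
        have hba' : bG⁻¹ * aG⁻¹ = aG⁻¹ * bG⁻¹ := by
          have := congrArg (fun x => x⁻¹) rel1
          simpa [mul_inv_rev] using this
        calc (bG * aG⁻¹)⁻¹ * ((bG * aG⁻¹)⁻¹ * (aG⁻¹ * bG ^ 2 * sG))
            = aG * (bG⁻¹ * aG) * bG⁻¹ * aG⁻¹ * bG ^ 2 * sG := by group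
          _ = aG * (aG * bG⁻¹) * bG⁻¹ * aG⁻¹ * bG ^ 2 * sG := by rw [hba]
          _ = aG * aG * bG⁻¹ * (bG⁻¹ * aG⁻¹) * bG ^ 2 * sG := by group
          _ = aG * aG * bG⁻¹ * (aG⁻¹ * bG⁻¹) * bG ^ 2 * sG := by rw [hba']
          _ = aG * aG * (bG⁻¹ * aG⁻¹) * bG * sG := by group
          _ = aG * aG * (aG⁻¹ * bG⁻¹) * bG * sG := by rw [hba']
          _ = aG * sG := by group
      · -- t
        show f₁ (ψ tF) * aG = aG * f₁ tF
        rw [ψ_t]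
        simp only [map_mul, map_inv, f₁_c, f₁_t]
        -- (b a⁻¹)⁻¹ t a = a t ⇔ t a = (b a⁻¹) a t = b t... use rel3 : t a t⁻¹ = b
        have h3 : tG * aG = bG * tG := by
          have := rel3
          calc tG * aG = (tG * aG * tG⁻¹) * tG := by group
            _ = bG * tG := by rw [this]
        rw [mul_assoc _ tG aG, h3]
        group
    | inv_of i ih =>
      have h' : f₁ (ψ (FreeGroup.of i)) * aG = aG * f₁ (FreeGroup.of i) := ih
      simp only [map_inv]
      calc (f₁ (ψ (FreeGroup.of i)))⁻¹ * aG
          = (f₁ (ψ (FreeGroup.of i)))⁻¹ * (aG * f₁ (FreeGroup.of i)) * (f₁ (FreeGroup.of i))⁻¹ := by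
            group
        _ = (f₁ (ψ (FreeGroup.of i)))⁻¹ * (f₁ (ψ (FreeGroup.of i)) * aG) * (f₁ (FreeGroup.of i))⁻¹ := by
            rw [h']
        _ = aG * (f₁ (FreeGroup.of i))⁻¹ := by group
    | mul x y ihx ihy =>
      simp only [map_mul]
      calc f₁ (ψ x) * f₁ (ψ y) * aG = f₁ (ψ x) * (f₁ (ψ y) * aG) := by group
        _ = f₁ (ψ x) * (aG * f₁ y) := by rw [ihy]
        _ = (f₁ (ψ x) * aG) * f₁ y := by group
        _ = aG * f₁ x * f₁ y := by rw [ihx]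
        _ = aG * (f₁ x * f₁ y) := by group
  intro x
  rw [← key x]
  group


lemma compat_pow : ∀ (n : ℤ) (x : F), f₁ ((ψ ^ n : MulAut F) x) = aG ^ n * f₁ x * (aG ^ n)⁻¹ := by
  have baseinv : ∀ x : F, f₁ ((ψ⁻¹ : MulAut F) x) = aG⁻¹ * f₁ x * aG := by
    intro x
    have := base_compat ((ψ⁻¹ : MulAut F) x)
    rw [show ψ ((ψ⁻¹ : MulAut F) x) = x from ψ.apply_symm_apply x] at this
    rw [this]
    group
  intro n
  induction n using Int.induction_on with
  | zero => intro x; simp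
  | succ n ih =>
    intro x
    have h1 : (ψ ^ ((n : ℤ) + 1) : MulAut F) x = (ψ ^ (n : ℤ) : MulAut F) (ψ x) := by
      rw [zpow_add_one]
      rfl
    rw [h1, ih (ψ x), base_compat x]
    group
  | pred n ih =>
    intro x
    have h1 : (ψ ^ (-(n : ℤ) - 1) : MulAut F) x = (ψ ^ (-(n : ℤ)) : MulAut F) ((ψ⁻¹ : MulAut F) x) := by
      rw [zpow_sub_one]
      rfl
    rw [h1, ih ((ψ⁻¹ : MulAut F) x), baseinv x]
    group

lemma compat : ∀ g : Multiplicative ℤ,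
    f₁.comp (θ g).toMonoidHom = (MulAut.conj (f₂ g)).toMonoidHom.comp f₁ := by
  intro g
  ext x
  simp only [MonoidHom.comp_apply, MulEquiv.coe_toMonoidHom, MulAut.conj_apply]
  have hθ : θ g = ψ ^ g.toAdd := rfl
  have hf₂ : f₂ g = aG ^ g.toAdd := rfl
  rw [hθ, hf₂]
  exact compat_pow g.toAdd (FreeGroup.of x)

/-- The homomorphism `F ⋊ ℤ →* G`. -/
def Ψ : H →* G := SemidirectProduct.lift f₁ f₂ compat

lemma ΨΦ (x : G) : Ψ (Φ x) = x := by
  have h : Ψ.comp Φ = MonoidHom.id G := by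
    apply PresentedGroup.ext
    intro i
    fin_cases i
    · show Ψ (Φ aG) = aG
      rw [Φ_a]
      show Ψ (inr g1) = aG
      rw [show Ψ (inr g1) = f₂ g1 from lift_inr _ _ _ _]
      show aG ^ (1 : ℤ) = aG
      simp
    · show Ψ (Φ bG) = bG
      rw [Φ_b, map_mul]
      rw [show Ψ (inl cF) = f₁ cF from lift_inl _ _ _ _,
        show Ψ (inr g1) = f₂ g1 from lift_inr _ _ _ _]
      rw [f₁_c]
      show bG * aG⁻¹ * aG ^ (1 : ℤ) = bG
      group
    · show Ψ (Φ sG) = sG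
      rw [Φ_s, show Ψ (inl sF) = f₁ sF from lift_inl _ _ _ _, f₁_s]
    · show Ψ (Φ tG) = tG
      rw [Φ_t, show Ψ (inl tF) = f₁ tF from lift_inl _ _ _ _, f₁_t]
  exact DFunLike.congr_fun h x

lemma Φ_inj : Function.Injective Φ :=
  Function.LeftInverse.injective ΨΦ

lemma freeGroup_surj (K : Type*) [Group K] [IsFreeGroup K] (hK : ∃ k : K, k ≠ 1) :
    ∃ f : K →* Multiplicative ℤ, Function.Surjective f := by
  have hne : Nonempty (IsFreeGroup.Generators K) := by
    by_contra h
    rw [not_nonempty_iff] at h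
    obtain ⟨k, hk⟩ := hK
    have hid : (MonoidHom.id K) = 1 := IsFreeGroup.ext_hom (fun a => (h.false a).elim)
    exact hk (by simpa using congrArg (fun f => f k) hid)
  obtain ⟨x₀⟩ := hne
  refine ⟨IsFreeGroup.lift (fun _ => Multiplicative.ofAdd 1), fun z => ?_⟩
  refine ⟨IsFreeGroup.of x₀ ^ z.toAdd, ?_⟩
  rw [map_zpow, IsFreeGroup.lift_of]
  rw [← ofAdd_zsmul]
  simp

lemma caseB (S : Subgroup G) (x : G) (hxS : x ∈ S) (hx : x ≠ 1)
    (hA : ∀ y ∈ S, (Φ y).right = 1) :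
    ∃ f : S →* Multiplicative ℤ, Function.Surjective f := by
  set SF : Subgroup F := (S.map Φ).comap (SemidirectProduct.inl : F →* H) with hSF
  have hmem : ∀ y : S, (Φ (y : G)).left ∈ SF := by
    intro y
    simp only [hSF, Subgroup.mem_comap]
    have h1 : (inl (Φ (y : G)).left : H) = Φ (y : G) := by
      ext
      · simp
      · simp [hA (y : G) y.2]
    rw [h1]
    exact Subgroup.mem_map_of_mem Φ y.2
  let ρ : S →* SF := {
    toFun := fun y => ⟨(Φ (y : G)).left, hmem y⟩
    map_one' := by ext; simp
    map_mul' := by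
      intro y z
      ext
      show (Φ ((y : G) * (z : G))).left = (Φ (y : G)).left * (Φ (z : G)).left
      rw [map_mul, mul_left, hA (y : G) y.2]
      simp }
  have hρsurj : Function.Surjective ρ := by
    rintro ⟨w, hw⟩
    simp only [hSF, Subgroup.mem_comap] at hw
    obtain ⟨y, hyS, hy⟩ := hw
    refine ⟨⟨y, hyS⟩, ?_⟩
    ext
    show (Φ y).left = w
    rw [hy, left_inl]
  have hSFnt : ∃ k : SF, k ≠ 1 := by
    refine ⟨ρ ⟨x, hxS⟩, fun hcon => ?_⟩
    apply hx
    have h1 : (Φ x).left = 1 := congrArg Subtype.val hcon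
    have h2 : Φ x = 1 := by
      ext
      · simpa using h1
      · simpa using hA x hxS
    have := Φ_inj (show Φ x = Φ 1 by rw [h2, map_one])
    exact this
  obtain ⟨h, hsurj⟩ := freeGroup_surj SF hSFnt
  exact ⟨h.comp ρ, by rw [MonoidHom.coe_comp]; exact hsurj.comp hρsurj⟩

lemma caseA (S : Subgroup G) (y : G) (hyS : y ∈ S) (hy : (Φ y).right ≠ 1) :
    ∃ f : S →* Multiplicative ℤ, Function.Surjective f := by
  let g : S →* Multiplicative ℤ := (rightHom.comp Φ).comp S.subtype
  let A : AddSubgroup ℤ := Subgroup.toAddSubgroup' g.range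
  obtain ⟨d, hd⟩ := Int.subgroup_cyclic A
  have hmemA : ∀ z : S, (g z).toAdd ∈ A := fun z => ⟨z, rfl⟩
  have hdvd : ∀ z : S, d ∣ (g z).toAdd := by
    intro z
    have h1 := hmemA z
    rw [hd, AddSubgroup.mem_closure_singleton] at h1
    obtain ⟨n, hn⟩ := h1
    exact ⟨n, by rw [← hn]; simp [smul_eq_mul, mul_comm]⟩
  have hd0 : d ≠ 0 := by
    intro h0
    apply hy
    have h1 := hdvd ⟨y, hyS⟩
    rw [h0, zero_dvd_iff] at h1
    have : g ⟨y, hyS⟩ = 1 := by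
      have := congrArg Multiplicative.ofAdd h1
      simpa using this
    exact this
  refine ⟨{
    toFun := fun z => Multiplicative.ofAdd ((g z).toAdd / d)
    map_one' := by simp
    map_mul' := by
      intro z w
      show Multiplicative.ofAdd ((g (z * w)).toAdd / d) = _
      rw [map_mul, toAdd_mul, Int.add_ediv_of_dvd_left (hdvd z)]
      rw [ofAdd_add]
  }, ?_⟩
  have hdA : d ∈ A := by
    rw [hd]
    exact AddSubgroup.mem_closure_singleton.mpr ⟨1, one_smul _ _⟩
  obtain ⟨z₁, hz₁⟩ : ∃ z₁ : S, g z₁ = Multiplicative.ofAdd d := hdA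
  intro w
  refine ⟨z₁ ^ w.toAdd, ?_⟩
  show Multiplicative.ofAdd ((g (z₁ ^ w.toAdd)).toAdd / d) = w
  rw [map_zpow, hz₁, ← ofAdd_zsmul, toAdd_ofAdd, smul_eq_mul, Int.mul_ediv_cancel _ hd0]
  simp

end GerstenAux

/-- Example 5.2: every nontrivial subgroup of the Gersten group admits a surjective
homomorphism onto ℤ (the group is locally indicable, even for non finitely generated
subgroups). -/
theorem Gersten_subgroups_surject_Z :
    ∀ S : Subgroup (PresentedGroup relsGersten), S ≠ ⊥ →
      ∃ f : S →* Multiplicative ℤ, Function.Surjective f := by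
  intro S hS
  obtain ⟨⟨x, hxS⟩, hx⟩ := Subgroup.ne_bot_iff_exists_ne_one.mp hS
  have hx1 : x ≠ 1 := fun h => hx (Subtype.ext h)
  by_cases hA : ∀ y ∈ S, (GerstenAux.Φ y).right = 1
  · exact GerstenAux.caseB S x hxS hx1 hA
  · push_neg at hA
    obtain ⟨y, hyS, hy⟩ := hA
    exact GerstenAux.caseA S y hyS hy
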